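/- arXiv:2506.18741 — 2 statements merged into one kernel-verified Lean document; each statement's English description precedes it below -/
import Mathlib

section
/- Let G(x,t) = (2πt)^(-1/2) · exp(-x²/(2t)) denote the one-dimensional heat kernel. Then for all x, y > 0, the time integral of the difference of heat kernels satisfies ∫₀^∞ (G(x−y,t) − G(x+y,t)) dt = 2·min(x,y). -/
open MeasureTheory

/-- The one-dimensional heat kernel. -/
noncomputable def heatKernel (x t : ℝ) : ℝ :=
  (2 * Real.pi * t) ^ (-(1 : ℝ) / 2) * Real.exp (-x ^ 2 / (2 * t))

open Real Filter Set Topology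

noncomputable def gInt (u : ℝ) : ℝ := ∫ s in (0:ℝ)..u, Real.exp (-s^2/2)

lemma gInt_cont : Continuous fun s : ℝ => Real.exp (-s^2/2) := by continuity

lemma gInt_hasDerivAt (u : ℝ) : HasDerivAt gInt (Real.exp (-u^2/2)) u := by
  exact intervalIntegral.integral_hasDerivAt_right (gInt_cont.intervalIntegrable _ _)
    gInt_cont.stronglyMeasurable.stronglyMeasurableAtFilter
    gInt_cont.continuousAt

lemma gInt_zero : gInt 0 = 0 := intervalIntegral.integral_same

lemma gInt_tendsto_atTop : Tendsto gInt atTop (𝓝 (Real.sqrt (π/2))) := by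
  have hint : IntegrableOn (fun s : ℝ => Real.exp (-s^2/2)) (Ioi 0) := by
    have : (fun s : ℝ => Real.exp (-s^2/2)) = fun s : ℝ => Real.exp (-(1/2) * s^2) := by
      funext s; ring_nf
    rw [this]
    exact (integrable_exp_neg_mul_sq (by norm_num)).integrableOn
  have h := intervalIntegral_tendsto_integral_Ioi 0 hint tendsto_id
  have : ∫ s in Ioi (0:ℝ), Real.exp (-s^2/2) = Real.sqrt (π/2) := by
    have : ∫ s in Ioi (0:ℝ), Real.exp (-s^2/2) = ∫ s in Ioi (0:ℝ), Real.exp (-(1/2) * s^2) := by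
      congr 1; funext s; ring_nf
    rw [this, integral_gaussian_Ioi]
    rw [show π / (1/2 : ℝ) = 4 * (π/2) by ring, show (4 : ℝ) * (π/2) = 2^2 * (π/2) by norm_num,
      Real.sqrt_mul (by positivity), Real.sqrt_sq (by norm_num)]
    ring
  rwa [this] at h

noncomputable def FF (a b t : ℝ) : ℝ :=
  if t = 0 then a - b else
    Real.sqrt (2/π) * (Real.sqrt t * (Real.exp (-a^2/(2*t)) - Real.exp (-b^2/(2*t)))
      + a * gInt (a / Real.sqrt t) - b * gInt (b / Real.sqrt t))

lemma expPart_hasDerivAt (a t : ℝ) (ht : 0 < t) :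
    HasDerivAt (fun t => Real.exp (-a^2/(2*t))) (Real.exp (-a^2/(2*t)) * (a^2/(2*t^2))) t := by
  have h1 : HasDerivAt (fun t : ℝ => -a^2/(2*t)) (a^2/(2*t^2)) t := by
    have h := (hasDerivAt_inv ht.ne').const_mul (-a^2/2)
    have hf : (fun t : ℝ => -a^2/(2*t)) = fun y => -a^2/2 * y⁻¹ := by funext s; ring
    rw [hf]
    refine h.congr_deriv ?_
    ring
  exact h1.exp

lemma gComp_hasDerivAt (a t : ℝ) (ht : 0 < t) :
    HasDerivAt (fun t => gInt (a / Real.sqrt t))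
      (Real.exp (-a^2/(2*t)) * (-(a/(2*t*Real.sqrt t)))) t := by
  have hsne : Real.sqrt t ≠ 0 := by positivity
  have hs : HasDerivAt Real.sqrt (1/(2*Real.sqrt t)) t := Real.hasDerivAt_sqrt ht.ne'
  have hinner : HasDerivAt (fun t => a / Real.sqrt t) (-(a/(2*t*Real.sqrt t))) t := by
    have h := (hs.inv hsne).const_mul a
    have hfun : (fun t : ℝ => a * (Real.sqrt t)⁻¹) = fun t => a / Real.sqrt t := by
      funext s; rw [div_eq_mul_inv]
    simp only [Pi.inv_apply] at h
    rw [hfun] at h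
    refine h.congr_deriv ?_
    rw [Real.sq_sqrt ht.le]
    ring
  have hg := (gInt_hasDerivAt (a / Real.sqrt t)).comp t hinner
  have hval : Real.exp (-(a / Real.sqrt t)^2/2) = Real.exp (-a^2/(2*t)) := by
    congr 1
    rw [div_pow, Real.sq_sqrt ht.le]
    ring
  rw [hval] at hg
  exact hg

lemma sqrt_two_div_pi_mul : Real.sqrt (2/π) * Real.sqrt (2*π) = 2 := by
  rw [← Real.sqrt_mul (by positivity)]
  rw [show (2/π) * (2*π) = 4 by field_simp; ring]
  rw [show (4:ℝ) = 2^2 by norm_num, Real.sqrt_sq (by norm_num)]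

set_option maxHeartbeats 1000000 in
lemma FF_hasDerivAt (a b t : ℝ) (ht : 0 < t) :
    HasDerivAt (FF a b)
      ((2*π*t)^(-(1:ℝ)/2) * Real.exp (-a^2/(2*t))
        - (2*π*t)^(-(1:ℝ)/2) * Real.exp (-b^2/(2*t))) t := by
  have hsne : Real.sqrt t ≠ 0 := by positivity
  have hs : HasDerivAt Real.sqrt (1/(2*Real.sqrt t)) t := Real.hasDerivAt_sqrt ht.ne'
  have h1 := hs.mul ((expPart_hasDerivAt a t ht).sub (expPart_hasDerivAt b t ht))
  have h2 := (gComp_hasDerivAt a t ht).const_mul a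
  have h3 := (gComp_hasDerivAt b t ht).const_mul b
  have H := ((h1.add h2).sub h3).const_mul (Real.sqrt (2/π))
  have heq : FF a b =ᶠ[𝓝 t] fun t =>
      Real.sqrt (2/π) * (Real.sqrt t * (Real.exp (-a^2/(2*t)) - Real.exp (-b^2/(2*t)))
        + a * gInt (a / Real.sqrt t) - b * gInt (b / Real.sqrt t)) := by
    filter_upwards [eventually_ne_nhds ht.ne'] with s hs
    simp [FF, hs]
  have H2 := H.congr_of_eventuallyEq heq
  refine H2.congr_deriv ?_
  simp only [Pi.sub_apply]
  have hrpow : (2*π*t)^(-(1:ℝ)/2) = (Real.sqrt (2*π) * Real.sqrt t)⁻¹ := by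
    rw [show (-(1:ℝ)/2) = -(1/2) by ring, Real.rpow_neg (by positivity), ← Real.sqrt_eq_rpow,
      Real.sqrt_mul (by positivity)]
  have hdne : Real.sqrt (2*π) ≠ 0 := by positivity
  have hc : Real.sqrt (2/π) = 2 / Real.sqrt (2*π) := by
    rw [eq_div_iff hdne]; exact sqrt_two_div_pi_mul
  have hss : Real.sqrt t * Real.sqrt t = t := Real.mul_self_sqrt ht.le
  rw [hrpow, hc]
  set s := Real.sqrt t with hsdef
  rw [← hss]
  field_simp
  ring

lemma exp_diff_bound {a b t : ℝ} (ha : 0 ≤ a) (hab : a ≤ b) (ht : 0 < t) :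
    Real.exp (-a^2/(2*t)) - Real.exp (-b^2/(2*t)) ≤ b^2/(2*t) := by
  have h1 : Real.exp (-a^2/(2*t)) ≤ 1 := by
    apply Real.exp_le_one_iff.2
    rw [neg_div]
    have : (0:ℝ) ≤ a^2/(2*t) := by positivity
    linarith
  have h2 : 1 - b^2/(2*t) ≤ Real.exp (-b^2/(2*t)) := by
    have h := Real.add_one_le_exp (-b^2/(2*t))
    have hneg : -b^2/(2*t) = -(b^2/(2*t)) := neg_div _ _
    linarith
  linarith

lemma exp_diff_nonneg {a b t : ℝ} (ha : 0 ≤ a) (hab : a ≤ b) (ht : 0 < t) :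
    0 ≤ Real.exp (-a^2/(2*t)) - Real.exp (-b^2/(2*t)) := by
  have h : -b^2/(2*t) ≤ -a^2/(2*t) := by
    have hsq : a^2 ≤ b^2 := by nlinarith
    gcongr
  have := Real.exp_le_exp.2 h
  linarith

lemma exp_diff_le_one {a b t : ℝ} (ha : 0 ≤ a) (ht : 0 < t) :
    Real.exp (-a^2/(2*t)) - Real.exp (-b^2/(2*t)) ≤ 1 := by
  have h1 : Real.exp (-a^2/(2*t)) ≤ 1 := by
    apply Real.exp_le_one_iff.2
    rw [neg_div]
    have : (0:ℝ) ≤ a^2/(2*t) := by positivity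
    linarith
  have h2 := Real.exp_pos (-b^2/(2*t))
  linarith

lemma FF_tendsto_atTop (a b : ℝ) (ha : 0 ≤ a) (hab : a ≤ b) :
    Tendsto (FF a b) atTop (𝓝 0) := by
  have hsqrtTop : Tendsto Real.sqrt atTop atTop := by
    refine tendsto_atTop_atTop.2 fun c => ⟨c^2, fun x hx => ?_⟩
    calc c ≤ |c| := le_abs_self c
      _ = Real.sqrt (c^2) := (Real.sqrt_sq_eq_abs c).symm
      _ ≤ Real.sqrt x := Real.sqrt_le_sqrt hx
  have h1 : Tendsto (fun t : ℝ => Real.sqrt t *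
      (Real.exp (-a^2/(2*t)) - Real.exp (-b^2/(2*t)))) atTop (𝓝 0) := by
    have hupper : Tendsto (fun t : ℝ => b^2 / (2 * Real.sqrt t)) atTop (𝓝 0) :=
      Tendsto.div_atTop tendsto_const_nhds (Tendsto.const_mul_atTop two_pos hsqrtTop)
    refine tendsto_of_tendsto_of_tendsto_of_le_of_le' tendsto_const_nhds hupper ?_ ?_
    · filter_upwards [eventually_gt_atTop (0:ℝ)] with t ht
      exact mul_nonneg (Real.sqrt_nonneg t) (exp_diff_nonneg ha hab ht)
    · filter_upwards [eventually_gt_atTop (0:ℝ)] with t ht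
      have hbd := exp_diff_bound ha hab ht
      have hss : Real.sqrt t * Real.sqrt t = t := Real.mul_self_sqrt ht.le
      have hsne : Real.sqrt t ≠ 0 := by positivity
      calc Real.sqrt t * (Real.exp (-a^2/(2*t)) - Real.exp (-b^2/(2*t)))
          ≤ Real.sqrt t * (b^2/(2*t)) := mul_le_mul_of_nonneg_left hbd (Real.sqrt_nonneg t)
        _ = b^2 / (2 * Real.sqrt t) := by
            rw [eq_div_iff (by positivity), show Real.sqrt t * (b^2/(2*t)) * (2 * Real.sqrt t) = b^2 * (Real.sqrt t * Real.sqrt t) / t by ring, hss, mul_div_assoc, div_self ht.ne', mul_one]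
  have hinv : Tendsto (fun t : ℝ => (Real.sqrt t)⁻¹) atTop (𝓝 0) := hsqrtTop.inv_tendsto_atTop
  have hgaux : ∀ c : ℝ, Tendsto (fun t : ℝ => gInt (c / Real.sqrt t)) atTop (𝓝 0) := by
    intro c
    have hca : Tendsto (fun t : ℝ => c / Real.sqrt t) atTop (𝓝 0) := by
      have := hinv.const_mul c
      simp only [mul_zero] at this
      simpa [div_eq_mul_inv] using this
    have := ((gInt_hasDerivAt 0).continuousAt.tendsto).comp hca
    simpa [gInt_zero, Function.comp_def] using this
  have H := ((h1.add ((hgaux a).const_mul a)).sub ((hgaux b).const_mul b)).const_mul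
    (Real.sqrt (2/π))
  have hval : Real.sqrt (2/π) * (0 + a * 0 - b * 0) = 0 := by ring
  rw [hval] at H
  refine Tendsto.congr' ?_ H
  filter_upwards [eventually_ne_atTop (0:ℝ)] with t ht
  simp [FF, ht]

lemma FF_tendsto_zero (a b : ℝ) (ha : 0 ≤ a) (hb : 0 < b) (hab : a ≤ b) :
    Tendsto (FF a b) (𝓝[>] (0:ℝ)) (𝓝 (a - b)) := by
  have hsqrt_to0 : Tendsto Real.sqrt (𝓝[>] (0:ℝ)) (𝓝 0) := by
    have : Tendsto Real.sqrt (𝓝 0) (𝓝 0) := by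
      simpa using (Real.continuous_sqrt.tendsto 0)
    exact this.mono_left nhdsWithin_le_nhds
  have hsq0 : Tendsto Real.sqrt (𝓝[>] (0:ℝ)) (𝓝[>] (0:ℝ)) := by
    rw [tendsto_nhdsWithin_iff]
    refine ⟨hsqrt_to0, ?_⟩
    filter_upwards [self_mem_nhdsWithin] with t ht
    exact Real.sqrt_pos.2 ht
  have h1 : Tendsto (fun t : ℝ => Real.sqrt t *
      (Real.exp (-a^2/(2*t)) - Real.exp (-b^2/(2*t)))) (𝓝[>] (0:ℝ)) (𝓝 0) := by
    refine tendsto_of_tendsto_of_tendsto_of_le_of_le' tendsto_const_nhds hsqrt_to0 ?_ ?_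
    · filter_upwards [self_mem_nhdsWithin] with t ht
      exact mul_nonneg (Real.sqrt_nonneg t) (exp_diff_nonneg ha hab ht)
    · filter_upwards [self_mem_nhdsWithin] with t ht
      calc Real.sqrt t * (Real.exp (-a^2/(2*t)) - Real.exp (-b^2/(2*t)))
          ≤ Real.sqrt t * 1 := mul_le_mul_of_nonneg_left (exp_diff_le_one ha ht)
            (Real.sqrt_nonneg t)
        _ = Real.sqrt t := mul_one _
  have hgaux : ∀ c : ℝ, 0 < c → Tendsto (fun t : ℝ => gInt (c / Real.sqrt t)) (𝓝[>] (0:ℝ))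
      (𝓝 (Real.sqrt (π/2))) := by
    intro c hc
    have hinv : Tendsto (fun t : ℝ => (Real.sqrt t)⁻¹) (𝓝[>] (0:ℝ)) atTop :=
      tendsto_inv_nhdsGT_zero.comp hsq0
    have h2 : Tendsto (fun t : ℝ => c / Real.sqrt t) (𝓝[>] (0:ℝ)) atTop := by
      have := Tendsto.const_mul_atTop hc hinv
      simpa [div_eq_mul_inv] using this
    exact gInt_tendsto_atTop.comp h2
  have hga : Tendsto (fun t : ℝ => a * gInt (a / Real.sqrt t)) (𝓝[>] (0:ℝ))
      (𝓝 (a * Real.sqrt (π/2))) := by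
    rcases ha.eq_or_lt with h|h
    · simp only [← h, zero_mul]
      exact tendsto_const_nhds
    · exact (hgaux a h).const_mul a
  have hgb := (hgaux b hb).const_mul b
  have H := ((h1.add hga).sub hgb).const_mul (Real.sqrt (2/π))
  have hone : Real.sqrt (2/π) * Real.sqrt (π/2) = 1 := by
    rw [← Real.sqrt_mul (by positivity), show (2/π)*(π/2) = 1 by field_simp, Real.sqrt_one]
  have hval : Real.sqrt (2/π) * (0 + a * Real.sqrt (π/2) - b * Real.sqrt (π/2)) = a - b := by
    linear_combination (a - b) * hone
  rw [hval] at H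
  refine Tendsto.congr' ?_ H
  filter_upwards [self_mem_nhdsWithin] with t ht
  simp [FF, ne_of_gt (show (0:ℝ) < t from ht)]

lemma key_integral (a b : ℝ) (ha : 0 ≤ a) (hb : 0 < b) (hab : a ≤ b) :
    ∫ t in Ioi (0:ℝ), ((2*π*t)^(-(1:ℝ)/2) * Real.exp (-a^2/(2*t))
      - (2*π*t)^(-(1:ℝ)/2) * Real.exp (-b^2/(2*t))) = b - a := by
  have hcont : ContinuousWithinAt (FF a b) (Ici 0) 0 := by
    rw [← continuousWithinAt_Ioi_iff_Ici]
    have h0 : FF a b 0 = a - b := by simp [FF]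
    unfold ContinuousWithinAt
    rw [h0]
    exact FF_tendsto_zero a b ha hb hab
  have hnonneg : ∀ t ∈ Ioi (0:ℝ), 0 ≤ (2*π*t)^(-(1:ℝ)/2) * Real.exp (-a^2/(2*t))
      - (2*π*t)^(-(1:ℝ)/2) * Real.exp (-b^2/(2*t)) := by
    intro t ht
    have ht' : (0:ℝ) < t := ht
    rw [← mul_sub]
    exact mul_nonneg (Real.rpow_nonneg (by positivity) _) (exp_diff_nonneg ha hab ht')
  have := integral_Ioi_of_hasDerivAt_of_nonneg hcont
    (fun t ht => FF_hasDerivAt a b t ht) hnonneg (FF_tendsto_atTop a b ha hab)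
  rw [this]
  simp [FF]

theorem stmt_0 (x y : ℝ) (hx : 0 < x) (hy : 0 < y) :
    ∫ t in Set.Ioi (0 : ℝ), (heatKernel (x - y) t - heatKernel (x + y) t) = 2 * min x y := by
  have ha : 0 ≤ |x - y| := abs_nonneg _
  have hb : 0 < x + y := by linarith
  have hab : |x - y| ≤ x + y := abs_le.2 ⟨by linarith, by linarith⟩
  have h := key_integral |x - y| (x + y) ha hb hab
  unfold heatKernel
  simp only [← sq_abs (x - y)]
  rw [h]
  rcases le_total x y with h' | h'
  · rw [abs_of_nonpos (by linarith), min_eq_left h']; ring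
  · rw [abs_of_nonneg (by linarith), min_eq_right h']; ring
end

section
/- Let Λ : [0,∞) → [0,α] be non-decreasing and right-continuous with Λ(t) → α as t → ∞, and let s(x) = inf{t : Λ(t) > x}. Write A = {t : Λ(t) = Λ(t⁻)} (continuity times). Then the Lebesgue–Stieltjes change of variables identity holds: ∫_{ {x : Λ(s(x)) = Λ(s(x)⁻)} } dx = ∫_{A} dΛ(t), i.e., the Lebesgue measure of the set of x covered at continuity times equals the dΛ-measure of the continuity times. -/
open MeasureTheory

theorem stmt_17 (α : ℝ) (hα : 0 < α) (Λ : StieltjesFunction ℝ)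
    (hneg : ∀ t < (0 : ℝ), Λ t = Λ 0)
    (hnn : ∀ t, 0 ≤ Λ t) (hle : ∀ t, Λ t ≤ α)
    (hsup : Filter.Tendsto Λ Filter.atTop (nhds α))
    (s : ℝ → ℝ) (hs : ∀ x, s x = sInf {t : ℝ | x < Λ t}) :
    volume {x : ℝ | x ∈ Set.Ico (Λ 0) α ∧ Function.leftLim Λ (s x) = Λ (s x)} =
      Λ.measure {t : ℝ | 0 ≤ t ∧ Function.leftLim Λ t = Λ t} := by
  classical
  set ℓ : ℝ → ℝ := Function.leftLim Λ with hℓdef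
  -- basic facts about the sets {t | x < Λ t}
  have hSne : ∀ x : ℝ, x < α → {t : ℝ | x < Λ t}.Nonempty := by
    intro x hx
    exact (hsup.eventually (eventually_gt_nhds hx)).exists
  have hSpos : ∀ x : ℝ, Λ 0 ≤ x → ∀ t ∈ {t : ℝ | x < Λ t}, (0:ℝ) ≤ t := by
    intro x hx t ht
    by_contra h
    push_neg at h
    rw [Set.mem_setOf_eq, hneg t h] at ht
    exact absurd hx (not_le.2 ht)
  have hSbdd : ∀ x : ℝ, Λ 0 ≤ x → BddBelow {t : ℝ | x < Λ t} := by
    intro x hx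
    exact ⟨0, hSpos x hx⟩
  -- left limit at 0 equals Λ 0
  have hne0 : (nhdsWithin (0:ℝ) (Set.Iio 0)) ≠ ⊥ := (nhdsLT_neBot (0:ℝ)).ne
  have himg : Λ '' Set.Iio 0 = {Λ 0} := by
    apply Set.eq_singleton_iff_nonempty_unique_mem.2
    constructor
    · exact ⟨Λ (-1), ⟨-1, by norm_num, rfl⟩⟩
    · rintro y ⟨u, hu, rfl⟩
      exact hneg u hu
  have hℓ0 : ℓ 0 = Λ 0 := by
    rw [hℓdef, Monotone.leftLim_eq_sSup Λ.mono, himg, csSup_singleton]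
  -- leftLim is ≥ Λ 0 for t ≥ 0
  have hℓge : ∀ t : ℝ, 0 ≤ t → Λ 0 ≤ ℓ t := by
    intro t ht
    calc Λ 0 = ℓ 0 := hℓ0.symm
    _ ≤ ℓ t := Λ.mono.leftLim ht
  -- the discontinuity set
  set D : Set ℝ := {t : ℝ | 0 ≤ t ∧ ℓ t ≠ Λ t} with hD
  have hDcount : D.Countable := Λ.countable_leftLim_ne.mono (fun t ht => ht.2)
  have hDsub : D ⊆ Set.Ici 0 := fun t ht => ht.1
  have hDmeas : MeasurableSet D := hDcount.measurableSet
  -- the continuity set as a difference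
  have hCeq : {t : ℝ | 0 ≤ t ∧ ℓ t = Λ t} = Set.Ici 0 \ D := by
    ext t
    simp only [Set.mem_setOf_eq, Set.mem_diff, Set.mem_Ici, hD, Set.mem_setOf_eq]
    tauto
  -- key facts about s x for x ∈ [Λ 0, α)
  have hs0 : ∀ x : ℝ, Λ 0 ≤ x → x < α → 0 ≤ s x := by
    intro x hx hx'
    rw [hs x]
    exact le_csInf (hSne x hx') (hSpos x hx)
  have hℓle : ∀ x : ℝ, Λ 0 ≤ x → x < α → ℓ (s x) ≤ x := by
    intro x hx hx'
    rw [hℓdef, Monotone.leftLim_eq_sSup Λ.mono]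
    apply csSup_le
    · exact ⟨Λ (s x - 1), ⟨s x - 1, by simp, rfl⟩⟩
    · rintro y ⟨u, hu, rfl⟩
      by_contra h
      push_neg at h
      have : u ∉ {t : ℝ | x < Λ t} := by
        apply notMem_of_lt_csInf _ (hSbdd x hx)
        rw [← hs x]; exact hu
      exact this h
  have hxle : ∀ x : ℝ, Λ 0 ≤ x → x < α → x ≤ Λ (s x) := by
    intro x hx hx'
    have htend : Filter.Tendsto Λ (nhdsWithin (s x) (Set.Ioi (s x))) (nhds (Λ (s x))) :=
      (Λ.right_continuous (s x)).tendsto.mono_left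
        (nhdsWithin_mono _ (Set.Ioi_subset_Ici le_rfl))
    apply ge_of_tendsto htend
    apply eventually_nhdsWithin_of_forall
    intro u hu
    have : sInf {t : ℝ | x < Λ t} < u := by rw [← hs x]; exact hu
    obtain ⟨v, hv, hvu⟩ := exists_lt_of_csInf_lt (hSne x hx') this
    exact le_of_lt (lt_of_lt_of_le hv (Λ.mono hvu.le))
  -- jump intervals: if x ∈ [ℓ t, Λ t) then s x = t
  have hsx_eq : ∀ t : ℝ, 0 ≤ t → ∀ x : ℝ, ℓ t ≤ x → x < Λ t → s x = t := by
    intro t ht x hx1 hx2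
    have hxΛ0 : Λ 0 ≤ x := le_trans (hℓge t ht) hx1
    have hxα : x < α := lt_of_lt_of_le hx2 (hle t)
    rw [hs x]
    apply le_antisymm
    · exact csInf_le (hSbdd x hxΛ0) hx2
    · apply le_csInf (hSne x hxα)
      intro u hu
      by_contra h
      push_neg at h
      have : Λ u ≤ ℓ t := Λ.mono.le_leftLim h
      exact absurd (lt_of_lt_of_le hu this) (not_lt.2 hx1)
  -- the union of jump intervals
  set F' : Set ℝ := ⋃ t ∈ D, Set.Ico (ℓ t) (Λ t) with hF'
  set F : Set ℝ := {x : ℝ | x ∈ Set.Ico (Λ 0) α ∧ ℓ (s x) ≠ Λ (s x)} with hF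
  have h1 : F' ⊆ F := by
    rintro x hx
    simp only [hF', Set.mem_iUnion] at hx
    obtain ⟨t, htD, hx1, hx2⟩ := hx
    have ht0 : 0 ≤ t := htD.1
    have hst : s x = t := hsx_eq t ht0 x hx1 hx2
    refine ⟨⟨le_trans (hℓge t ht0) hx1, lt_of_lt_of_le hx2 (hle t)⟩, ?_⟩
    rw [hst]; exact htD.2
  have h2 : F ⊆ F' ∪ (Λ '' D) := by
    rintro x ⟨⟨hx, hxα⟩, hne⟩
    have ht0 : 0 ≤ s x := hs0 x hx hxα
    have htD : s x ∈ D := ⟨ht0, hne⟩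
    rcases eq_or_lt_of_le (hxle x hx hxα) with heq | hlt
    · exact Or.inr ⟨s x, htD, heq.symm⟩
    · left
      simp only [hF', Set.mem_iUnion]
      exact ⟨s x, htD, hℓle x hx hxα, hlt⟩
  -- measurability and null sets
  have hF'meas : MeasurableSet F' :=
    MeasurableSet.biUnion hDcount (fun t _ => measurableSet_Ico)
  have hNnull : volume (Λ '' D) = 0 := (hDcount.image Λ).measure_zero _
  -- volume F = volume F'
  have hFF' : volume F = volume F' := by
    apply le_antisymm
    · calc volume F ≤ volume (F' ∪ (Λ '' D)) := measure_mono h2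
        _ ≤ volume F' + volume (Λ '' D) := measure_union_le _ _
        _ = volume F' := by rw [hNnull, add_zero]
    · exact measure_mono h1
  -- F is measurable (it is F' plus a null set)
  have hFmeas : MeasurableSet F := by
    have : F = F' ∪ (F \ F') := (Set.union_diff_cancel h1).symm
    rw [this]
    apply hF'meas.union
    have : (F \ F') ⊆ Λ '' D := by
      intro x hx
      rcases h2 hx.1 with h | h
      · exact absurd h hx.2
      · exact h
    exact (((hDcount.image Λ).mono this).measurableSet)
  -- pairwise disjointness of jump intervals
  have hdisj : D.PairwiseDisjoint (fun t => Set.Ico (ℓ t) (Λ t)) := by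
    intro t htD u huD htu
    rcases htu.lt_or_gt with h | h
    · apply Set.disjoint_left.2
      rintro x ⟨_, hx2⟩ ⟨hx3, _⟩
      exact absurd (lt_of_lt_of_le hx2 (le_trans (Λ.mono.le_leftLim h) hx3)) (lt_irrefl x)
    · apply Set.disjoint_left.2
      rintro x ⟨hx1, _⟩ ⟨_, hx4⟩
      exact absurd (lt_of_lt_of_le hx4 (le_trans (Λ.mono.le_leftLim h) hx1)) (lt_irrefl x)
  -- volume F' = Λ.measure D
  have hvolF' : volume F' = Λ.measure D := by
    have hDun : D = ⋃ t ∈ D, {t} := by simp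
    rw [hF', measure_biUnion hDcount hdisj (fun t _ => measurableSet_Ico)]
    conv_rhs => rw [hDun]
    rw [measure_biUnion hDcount (fun t _ u _ htu => by
      simp [Set.disjoint_singleton, htu]) (fun t _ => measurableSet_singleton t)]
    congr 1
    ext t
    rw [Real.volume_Ico, Λ.measure_singleton]
  -- Λ.measure (Ici 0)
  have hIci : Λ.measure (Set.Ici 0) = ENNReal.ofReal (α - Λ 0) := by
    rw [Λ.measure_Ici hsup 0, ← hℓdef, hℓ0]
  have hDfin : Λ.measure D ≠ ⊤ := by
    intro h
    have : Λ.measure (Set.Ici 0) = ⊤ :=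
      top_le_iff.1 (h ▸ measure_mono hDsub)
    rw [hIci] at this
    exact ENNReal.ofReal_ne_top this
  -- RHS
  have hRHS : Λ.measure {t : ℝ | 0 ≤ t ∧ ℓ t = Λ t}
      = ENNReal.ofReal (α - Λ 0) - Λ.measure D := by
    rw [hCeq, measure_diff hDsub hDmeas.nullMeasurableSet hDfin, hIci]
  -- LHS
  have hEeq : {x : ℝ | x ∈ Set.Ico (Λ 0) α ∧ ℓ (s x) = Λ (s x)}
      = Set.Ico (Λ 0) α \ F := by
    ext x
    simp only [Set.mem_setOf_eq, Set.mem_diff, hF, Set.mem_setOf_eq]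
    tauto
  have hFsub : F ⊆ Set.Ico (Λ 0) α := fun x hx => hx.1
  have hFfin : volume F ≠ ⊤ := by
    rw [hFF', hvolF']
    exact hDfin
  have hLHS : volume {x : ℝ | x ∈ Set.Ico (Λ 0) α ∧ ℓ (s x) = Λ (s x)}
      = ENNReal.ofReal (α - Λ 0) - Λ.measure D := by
    rw [hEeq, measure_diff hFsub hFmeas.nullMeasurableSet hFfin, Real.volume_Ico,
      hFF', hvolF']
  rw [hLHS, hRHS]
end
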